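/- arXiv:1501.04522 — 5 statements merged into one kernel-verified Lean document; each statement's English description precedes it below -/
import Mathlib

section
/- If L/K is an extension of fields of characteristic p > 0 such that K is existentially closed in L (every existential ring-language sentence with parameters in K true in L is true in K), then the perfect hull K^perf is existentially closed in the perfect hull L^perf. -/
open FirstOrder Ring Language

/-- `f : K →+* L` is existentially closed (i.e. `K` is existentially closed in `L` via `f`)
if every quantifier-free ring-language formula with parameters from `K` that has a solution
in `L` already has a solution in `K`. -/
def RingExistentiallyClosedIn {K L : Type*} [CommRing K] [CommRing L] (f : K →+* L) : Prop :=
  ∀ (n : ℕ) (φ : Language.ring.BoundedFormula K n), φ.IsQF →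
    (∃ xs : Fin n → L,
      (letI := compatibleRingOfRing L; φ.Realize (fun a => f a) xs)) →
    ∃ xs : Fin n → K,
      (letI := compatibleRingOfRing K; φ.Realize id xs)

section Aux

variable {L' : Language} {α β : Type*} {n : ℕ}

private lemma aux_isQF_mapTermRel {L'' : Language}
    {ft : ∀ n, L'.Term (α ⊕ Fin n) → L''.Term (β ⊕ Fin n)}
    {fr : ∀ n, L'.Relations n → L''.Relations n}
    {φ : L'.BoundedFormula α n} (h : φ.IsQF) :
    (φ.mapTermRel ft fr (fun _ => id)).IsQF := by
  induction h with
  | falsum => exact BoundedFormula.isQF_bot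
  | of_isAtomic ha =>
    cases ha with
    | equal t₁ t₂ => exact (BoundedFormula.IsAtomic.equal _ _).isQF
    | rel R ts => exact (BoundedFormula.IsAtomic.rel _ _).isQF
  | imp _ _ ih1 ih2 => exact ih1.imp ih2

private lemma aux_isQF_subst {φ : L'.BoundedFormula α n} (h : φ.IsQF) (tf : α → L'.Term β) :
    (φ.subst tf).IsQF :=
  aux_isQF_mapTermRel h

private lemma aux_realize_congr {M : Type*} [L'.Structure M] [DecidableEq α]
    {φ : L'.BoundedFormula α n} {v v' : α → M} {xs : Fin n → M}
    (h : ∀ a ∈ φ.freeVarFinset, v a = v' a) :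
    φ.Realize v xs ↔ φ.Realize v' xs := by
  rw [← BoundedFormula.realize_restrictFreeVar'
      (Set.Subset.refl (↑φ.freeVarFinset : Set α)) (v := v),
    ← BoundedFormula.realize_restrictFreeVar'
      (Set.Subset.refl (↑φ.freeVarFinset : Set α)) (v := v')]
  have hv : (v ∘ (↑) : (↑φ.freeVarFinset : Set α) → M) = v' ∘ (↑) :=
    funext fun a => h a (Finset.mem_coe.mp a.2)
  rw [hv]

/-- An injective ring hom as an embedding in the language of rings. -/
private def auxRingEmb {A B : Type*} [NonAssocRing A] [NonAssocRing B]
    [CompatibleRing A] [CompatibleRing B] (f : A →+* B) (hf : Function.Injective f) :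
    Language.ring.Embedding A B :=
  { toFun := f
    inj' := hf
    map_fun' := fun {n} g x => by cases g <;> simp
    map_rel' := fun {n} r => by cases r }

private lemma aux_range_pow {A B : Type*} [CommRing A] [CommRing B] (f : A →+* B)
    {p : ℕ} {x : B} {m N : ℕ} (hm : x ^ p ^ m ∈ f.range) (h : m ≤ N) :
    x ^ p ^ N ∈ f.range := by
  obtain ⟨b, hb⟩ := hm
  exact ⟨b ^ p ^ (N - m), by
    rw [map_pow, hb, ← pow_mul, ← pow_add, Nat.add_sub_cancel' h]⟩

end Aux

/-- If `L/K` is an extension of fields of characteristic `p > 0` such that `K` is existentially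
closed in `L`, then the perfect hull of `K` is existentially closed in the perfect hull of `L`.
Here the perfect hulls are formalized as perfect, purely inseparable extensions `Kp/K`, `Lp/L`
fitting into a commuting square `K ⊆ Kp ⊆ Lp`, `K ⊆ L ⊆ Lp`. -/
theorem exClosed_perfectHull (p : ℕ) (hp : p ≠ 0)
    (K L Kp Lp : Type*) [Field K] [Field L] [Field Kp] [Field Lp]
    [CharP K p]
    [Algebra K L] [Algebra K Kp] [Algebra L Lp] [Algebra K Lp] [Algebra Kp Lp]
    [IsScalarTower K Kp Lp] [IsScalarTower K L Lp]
    [PerfectField Kp] [PerfectField Lp]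
    [IsPurelyInseparable K Kp] [IsPurelyInseparable L Lp]
    (hKL : RingExistentiallyClosedIn (algebraMap K L)) :
    RingExistentiallyClosedIn (algebraMap Kp Lp) := by
  classical
  letI := compatibleRingOfRing K
  letI := compatibleRingOfRing L
  letI := compatibleRingOfRing Kp
  letI := compatibleRingOfRing Lp
  have hp' : p.Prime := (CharP.char_is_prime_or_zero K p).resolve_right hp
  haveI : Fact p.Prime := ⟨hp'⟩
  haveI : CharP L p := charP_of_injective_algebraMap (algebraMap K L).injective p
  haveI : CharP Kp p := charP_of_injective_algebraMap (algebraMap K Kp).injective p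
  haveI : CharP Lp p := charP_of_injective_algebraMap (algebraMap K Lp).injective p
  haveI : ExpChar K p := .prime hp'
  haveI : ExpChar L p := .prime hp'
  haveI : ExpChar Kp p := .prime hp'
  haveI : ExpChar Lp p := .prime hp'
  intro n φ hQF hex
  obtain ⟨xs, hxs⟩ := hex
  set s : Finset Kp := φ.freeVarFinset with hs
  -- choose exponents
  have hK' : ∀ a : Kp, ∃ m : ℕ, a ^ p ^ m ∈ (algebraMap K Kp).range := fun a =>
    IsPurelyInseparable.pow_mem K p a
  have hL' : ∀ x : Lp, ∃ m : ℕ, x ^ p ^ m ∈ (algebraMap L Lp).range := fun x =>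
    IsPurelyInseparable.pow_mem L p x
  choose mf hmf using hK'
  choose kf hkf using hL'
  set N : ℕ := (s.sup mf) ⊔ (Finset.univ.sup fun i => kf (xs i)) with hN
  have hmN : ∀ a ∈ s, a ^ p ^ N ∈ (algebraMap K Kp).range := fun a ha =>
    aux_range_pow _ (hmf a) (by rw [hN]; exact le_trans (Finset.le_sup ha) le_sup_left)
  have hkN : ∀ i : Fin n, (xs i) ^ p ^ N ∈ (algebraMap L Lp).range := fun i =>
    aux_range_pow _ (hkf (xs i)) (by rw [hN]; exact le_trans (Finset.le_sup (f := fun i => kf (xs i)) (Finset.mem_univ i)) le_sup_right)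
  -- the parameter translation map
  set c : Kp → K := fun a =>
    if h : a ^ p ^ N ∈ (algebraMap K Kp).range then h.choose else 0 with hc
  have hca : ∀ a ∈ s, algebraMap K Kp (c a) = a ^ p ^ N := by
    intro a ha
    have h := hmN a ha
    simp only [hc, dif_pos h]
    exact h.choose_spec
  choose ys hys using hkN
  set ψ : Language.ring.BoundedFormula K n := φ.subst (fun a => Term.var (c a)) with hψ
  have hψQF : ψ.IsQF := aux_isQF_subst hQF _
  -- Step 1: apply Frobenius^N to the solution in Lp
  have e1 : φ.Realize
      ((iterateFrobenius Lp p N) ∘ fun a => algebraMap Kp Lp a)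
      ((iterateFrobenius Lp p N) ∘ xs) :=
    (hQF.realize_embedding
      (auxRingEmb (iterateFrobenius Lp p N) (iterateFrobenius Lp p N).injective)).mpr hxs
  -- Step 2: rewrite as an L-valued situation
  have e2 : φ.Realize
      ((algebraMap L Lp) ∘ fun a => algebraMap K L (c a))
      ((algebraMap L Lp) ∘ ys) := by
    have hxs' : (iterateFrobenius Lp p N) ∘ xs = (algebraMap L Lp) ∘ ys := by
      funext i
      simp only [Function.comp_apply, iterateFrobenius_def, hys i]
    rw [← hxs']
    refine (aux_realize_congr ?_).mp e1
    intro a ha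
    have h1 : algebraMap Kp Lp (algebraMap K Kp (c a)) = algebraMap Kp Lp (a ^ p ^ N) := by
      rw [hca a ha]
    simp only [Function.comp_apply, iterateFrobenius_def]
    rw [← map_pow, ← h1, ← IsScalarTower.algebraMap_apply K Kp Lp,
      IsScalarTower.algebraMap_apply K L Lp]
  have e3 : φ.Realize (fun a => algebraMap K L (c a)) ys :=
    (hQF.realize_embedding
      (auxRingEmb (algebraMap L Lp) (algebraMap L Lp).injective)).mp e2
  have e4 : ψ.Realize (fun b => algebraMap K L b) ys := by
    rw [hψ, BoundedFormula.realize_subst]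
    exact e3
  obtain ⟨zs, hzs⟩ := hKL n ψ hψQF ⟨ys, e4⟩
  -- move the solution back into Kp
  have e6 : ψ.Realize ((algebraMap K Kp) ∘ id) ((algebraMap K Kp) ∘ zs) :=
    (hψQF.realize_embedding
      (auxRingEmb (algebraMap K Kp) (algebraMap K Kp).injective)).mpr hzs
  have e7 : φ.Realize (fun a => algebraMap K Kp (c a)) ((algebraMap K Kp) ∘ zs) := by
    rw [hψ, BoundedFormula.realize_subst] at e6
    exact e6
  set ws : Fin n → Kp :=
    (iterateFrobeniusEquiv Kp p N).symm ∘ ((algebraMap K Kp) ∘ zs) with hws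
  have hwseq : (iterateFrobenius Kp p N) ∘ ws = (algebraMap K Kp) ∘ zs := by
    funext i
    simp only [hws, Function.comp_apply, ← coe_iterateFrobeniusEquiv,
      RingEquiv.apply_symm_apply]
  have e8 : φ.Realize ((iterateFrobenius Kp p N) ∘ id) ((iterateFrobenius Kp p N) ∘ ws) := by
    rw [hwseq]
    refine (aux_realize_congr ?_).mp e7
    intro a ha
    simp only [Function.comp_apply, id_eq, iterateFrobenius_def]
    exact hca a ha
  exact ⟨ws, (hQF.realize_embedding
      (auxRingEmb (iterateFrobenius Kp p N) (iterateFrobenius Kp p N).injective)).mp e8⟩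
end

section
/- Let (K,v) be an equicharacteristic henselian valued field, E ⊆ Kv a subfield of the residue field, and f : E → K a partial section of the residue map (a ring embedding with res(f(a)) = a for all a ∈ E). If F/E is a separably generated subextension of Kv/E, then f extends to a partial section F → K. -/
open IsLocalRing IntermediateField Polynomial

namespace PSE

variable {K : Type*} [Field K] (O : ValuationSubring K)

/-- `y ∈ O` lifts `x` in the residue field. -/
def Lifts (x : ResidueField ↥O) (y : K) : Prop :=
  ∃ h : y ∈ O, residue ↥O ⟨y, h⟩ = x

theorem lifts_zero : Lifts O 0 0 := ⟨zero_mem _, map_zero _⟩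
theorem lifts_one : Lifts O 1 1 := ⟨one_mem _, map_one _⟩

theorem Lifts.add {x x' y y'} (h : Lifts O x y) (h' : Lifts O x' y') :
    Lifts O (x + x') (y + y') := by
  obtain ⟨h1, h2⟩ := h; obtain ⟨h1', h2'⟩ := h'
  exact ⟨add_mem h1 h1', by rw [show (⟨y + y', _⟩ : ↥O) = ⟨y, h1⟩ + ⟨y', h1'⟩ from rfl,
    map_add, h2, h2']⟩

theorem Lifts.mul {x x' y y'} (h : Lifts O x y) (h' : Lifts O x' y') :
    Lifts O (x * x') (y * y') := by
  obtain ⟨h1, h2⟩ := h; obtain ⟨h1', h2'⟩ := h'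
  exact ⟨mul_mem h1 h1', by rw [show (⟨y * y', _⟩ : ↥O) = ⟨y, h1⟩ * ⟨y', h1'⟩ from rfl,
    map_mul, h2, h2']⟩

theorem Lifts.neg {x y} (h : Lifts O x y) : Lifts O (-x) (-y) := by
  obtain ⟨h1, h2⟩ := h
  exact ⟨neg_mem h1, by rw [show (⟨-y, _⟩ : ↥O) = -⟨y, h1⟩ from rfl, map_neg, h2]⟩

theorem Lifts.isUnit {x y} (h : Lifts O x y) (hx : x ≠ 0) : IsUnit (⟨y, h.1⟩ : ↥O) := by
  obtain ⟨h1, h2⟩ := h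
  by_contra hu
  exact hx (h2 ▸ (Ideal.Quotient.eq_zero_iff_mem.2 ((mem_maximalIdeal _).2 hu)))

theorem Lifts.inv {x y} (h : Lifts O x y) (hx : x ≠ 0) : Lifts O x⁻¹ y⁻¹ := by
  obtain ⟨u, hu⟩ := h.isUnit O hx
  obtain ⟨h1, h2⟩ := h
  have hyu : (u : ↥O) = ⟨y, h1⟩ := hu
  have hy0 : y ≠ 0 := by
    rintro rfl; exact hx (by rw [show (⟨0, h1⟩ : ↥O) = 0 from rfl, map_zero] at h2; exact h2.symm)
  have hmul : y * ((u⁻¹ : Units ↥O) : ↥O).1 = 1 := by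
    have := u.mul_inv
    have := congrArg (Subtype.val) (hyu ▸ this)
    simpa using this
  have hinv : ((u⁻¹ : Units ↥O) : ↥O).1 = y⁻¹ := by
    field_simp at hmul ⊢
    linear_combination hmul
  refine ⟨hinv ▸ ((u⁻¹ : Units ↥O) : ↥O).2, ?_⟩
  have : residue ↥O ((u⁻¹ : Units ↥O) : ↥O) = x⁻¹ := by
    have h1' : residue ↥O (u : ↥O) * residue ↥O ((u⁻¹ : Units ↥O) : ↥O) = 1 := by
      rw [← map_mul, u.mul_inv, map_one]
    rw [hyu, h2] at h1'
    field_simp at h1' ⊢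
    linear_combination h1'
  rw [← this]
  congr 1
  exact Subtype.ext hinv.symm


/-- the section property -/
def IsSec (E' : Subfield (ResidueField ↥O)) (g : ↥E' →+* K) : Prop :=
  ∀ a : ↥E', Lifts O (a : ResidueField ↥O) (g a)

/-- The set of elements of `E'` where `g` has the section property, as a subfield. -/
def secSubfield (E' : Subfield (ResidueField ↥O)) (g : ↥E' →+* K) :
    Subfield (ResidueField ↥O) where
  carrier := {x | ∃ hx : x ∈ E', Lifts O x (g ⟨x, hx⟩)}
  one_mem' := ⟨one_mem _, by rw [show (⟨1, _⟩ : ↥E') = 1 from rfl, map_one]; exact lifts_one O⟩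
  zero_mem' := ⟨zero_mem _, by rw [show (⟨0, _⟩ : ↥E') = 0 from rfl, map_zero]; exact lifts_zero O⟩
  mul_mem' := by
    rintro x y ⟨hx, hlx⟩ ⟨hy, hly⟩
    refine ⟨mul_mem hx hy, ?_⟩
    rw [show (⟨x * y, _⟩ : ↥E') = ⟨x, hx⟩ * ⟨y, hy⟩ from rfl, map_mul]
    exact hlx.mul O hly
  add_mem' := by
    rintro x y ⟨hx, hlx⟩ ⟨hy, hly⟩
    refine ⟨add_mem hx hy, ?_⟩
    rw [show (⟨x + y, _⟩ : ↥E') = ⟨x, hx⟩ + ⟨y, hy⟩ from rfl, g.map_add]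
    exact hlx.add O hly
  neg_mem' := by
    rintro x ⟨hx, hlx⟩
    refine ⟨neg_mem hx, ?_⟩
    rw [show (⟨-x, _⟩ : ↥E') = -⟨x, hx⟩ from rfl, g.map_neg]
    exact hlx.neg O
  inv_mem' := by
    rintro x ⟨hx, hlx⟩
    refine ⟨inv_mem hx, ?_⟩
    rcases eq_or_ne x 0 with rfl | hx0
    · rw [show (⟨(0:ResidueField ↥O)⁻¹, _⟩ : ↥E') = 0 from Subtype.ext inv_zero, map_zero,
        inv_zero]
      exact lifts_zero O
    · rw [show (⟨x⁻¹, _⟩ : ↥E') = (⟨x, hx⟩)⁻¹ from rfl, map_inv₀]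
      exact hlx.inv O hx0

theorem mem_secSubfield {E' : Subfield (ResidueField ↥O)} {g : ↥E' →+* K} {x} :
    x ∈ secSubfield O E' g ↔ ∃ hx : x ∈ E', Lifts O x (g ⟨x, hx⟩) := Iff.rfl

theorem isSec_of_le {E' : Subfield (ResidueField ↥O)} {g : ↥E' →+* K}
    (h : E' ≤ secSubfield O E' g) : IsSec O E' g := by
  intro a
  obtain ⟨hx, hl⟩ := (mem_secSubfield O).1 (h a.2)
  exact (show (⟨(a : ResidueField ↥O), hx⟩ : ↥E') = a from Subtype.ext rfl) ▸ hl

/-- A good graph over `F`. -/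
def Good (F : Subfield (ResidueField ↥O)) (R : Subring (ResidueField ↥O × K)) : Prop :=
  (∀ p ∈ R, p.1 ∈ F) ∧ (∀ p ∈ R, Lifts O p.1 p.2) ∧
  (∀ p ∈ R, p.1 ≠ 0 → (p.1⁻¹, p.2⁻¹) ∈ R) ∧
  (∀ y : K, ((0 : ResidueField ↥O), y) ∈ R → y = 0)

noncomputable def graphOf (E' : Subfield (ResidueField ↥O)) (g : ↥E' →+* K) : Subring (ResidueField ↥O × K) :=
  (E'.subtype.prod g).range

theorem mem_graphOf {E' : Subfield (ResidueField ↥O)} {g : ↥E' →+* K} {p} :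
    p ∈ graphOf O E' g ↔ ∃ a : ↥E', ((a : ResidueField ↥O), g a) = p := Iff.rfl

theorem graphOf_good {F E' : Subfield (ResidueField ↥O)} {g : ↥E' →+* K}
    (hE'F : E' ≤ F) (hsec : IsSec O E' g) : Good O F (graphOf O E' g) := by
  refine ⟨?_, ?_, ?_, ?_⟩
  · rintro p ⟨a, rfl⟩; exact hE'F a.2
  · rintro p ⟨a, rfl⟩; exact hsec a
  · rintro p ⟨a, rfl⟩ ha
    exact ⟨a⁻¹, by simp [RingHom.prod_apply, map_inv₀]⟩
  · rintro y ⟨a, ha⟩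
    have h1 : (a : ResidueField ↥O) = 0 := congrArg Prod.fst ha
    have h2 : g a = y := congrArg Prod.snd ha
    rw [← h2, show a = 0 from Subtype.ext h1, map_zero]


theorem Good.unique {F R} (hR : Good O F R) {x : ResidueField ↥O} {y y' : K}
    (h : (x, y) ∈ R) (h' : (x, y') ∈ R) : y = y' :=
  sub_eq_zero.mp (hR.2.2.2 (y - y') (by simpa using R.sub_mem h h'))

/-- The domain of a good graph, as a subfield of the residue field. -/
def domOf {F} (R : Subring (ResidueField ↥O × K)) (hR : Good O F R) :
    Subfield (ResidueField ↥O) where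
  carrier := {x | ∃ y : K, (x, y) ∈ R}
  one_mem' := ⟨1, R.one_mem⟩
  zero_mem' := ⟨0, R.zero_mem⟩
  mul_mem' := by rintro x x' ⟨y, hy⟩ ⟨y', hy'⟩; exact ⟨y * y', R.mul_mem hy hy'⟩
  add_mem' := by rintro x x' ⟨y, hy⟩ ⟨y', hy'⟩; exact ⟨y + y', R.add_mem hy hy'⟩
  neg_mem' := by rintro x ⟨y, hy⟩; exact ⟨-y, R.neg_mem hy⟩
  inv_mem' := by
    rintro x ⟨y, hy⟩
    rcases eq_or_ne x 0 with rfl | h0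
    · exact ⟨0, by rw [inv_zero]; exact R.zero_mem⟩
    · exact ⟨y⁻¹, hR.2.2.1 (x, y) hy h0⟩

theorem mem_domOf {F R} {hR : Good O F R} {x : ResidueField ↥O} :
    x ∈ domOf O R hR ↔ ∃ y : K, (x, y) ∈ R := Iff.rfl

/-- The ring hom defined by a good graph. -/
noncomputable def homOfGraph {F R} (hR : Good O F R) : ↥(domOf O R hR) →+* K where
  toFun a := Classical.choose ((mem_domOf O).1 a.2)
  map_one' := hR.unique O (Classical.choose_spec ((mem_domOf O).1 (1 : ↥(domOf O R hR)).2))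
    R.one_mem
  map_zero' := hR.unique O (Classical.choose_spec ((mem_domOf O).1 (0 : ↥(domOf O R hR)).2))
    R.zero_mem
  map_mul' a b := by
    have ha := Classical.choose_spec ((mem_domOf O).1 a.2)
    have hb := Classical.choose_spec ((mem_domOf O).1 b.2)
    have hab := Classical.choose_spec ((mem_domOf O).1 (a * b).2)
    exact hR.unique O hab (by exact R.mul_mem ha hb)
  map_add' a b := by
    have ha := Classical.choose_spec ((mem_domOf O).1 a.2)
    have hb := Classical.choose_spec ((mem_domOf O).1 b.2)
    have hab := Classical.choose_spec ((mem_domOf O).1 (a + b).2)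
    exact hR.unique O hab (by exact R.add_mem ha hb)

theorem homOfGraph_mem {F R} (hR : Good O F R) (a : ↥(domOf O R hR)) :
    ((a : ResidueField ↥O), homOfGraph O hR a) ∈ R :=
  Classical.choose_spec ((mem_domOf O).1 a.2)

theorem homOfGraph_eq {F R} (hR : Good O F R) {x y} (h : (x, y) ∈ R)
    (hx : x ∈ domOf O R hR) : homOfGraph O hR ⟨x, hx⟩ = y :=
  hR.unique O (homOfGraph_mem O hR ⟨x, hx⟩) h

set_option synthInstance.maxHeartbeats 1000000 in
set_option maxHeartbeats 2000000 in
theorem hensel_step [HenselianLocalRing ↥O] {F D : Subfield (ResidueField ↥O)} (hDF : D ≤ F)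
    {g : ↥D →+* K} (hsec : IsSec O D g) {α : ResidueField ↥O} (hαF : α ∈ F)
    (hint : IsIntegral ↥D α) (hsep : (minpoly ↥D α).Separable) :
    ∃ (D' : Subfield (ResidueField ↥O)) (g' : ↥D' →+* K) (hDD' : D ≤ D'),
      D' ≤ F ∧ α ∈ D' ∧ IsSec O D' g' ∧
      ∀ x : ↥D, g' (Subfield.inclusion hDD' x) = g x := by
  classical
  set q := minpoly ↥D α with hq
  -- corestriction of `g` to `O`
  let g₀ : ↥D →+* ↥O :=
    { toFun := fun a => ⟨g a, (hsec a).1⟩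
      map_one' := Subtype.ext (map_one g)
      map_mul' := fun a b => Subtype.ext (g.map_mul a b)
      map_zero' := Subtype.ext (map_zero g)
      map_add' := fun a b => Subtype.ext (g.map_add a b) }
  have hres : (residue ↥O).comp g₀ = D.subtype := RingHom.ext fun a => (hsec a).2
  have hsubg : (O.subtype).comp g₀ = g := RingHom.ext fun a => rfl
  set Q : Polynomial ↥O := q.map g₀ with hQ
  have hQmonic : Q.Monic := (minpoly.monic hint).map g₀
  -- residue of evaluation
  have keyres : ∀ b : ↥O, residue ↥O (Q.eval b) = (q.map D.subtype).eval (residue ↥O b) := by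
    intro b
    rw [hQ, eval_map, hom_eval₂, hres, ← eval_map]
  set qb := q.map D.subtype with hqb
  have halg : algebraMap ↥D (ResidueField ↥O) = D.subtype := rfl
  have hqbα : qb.eval α = 0 := by
    rw [hqb, eval_map, ← halg, ← aeval_def]
    exact minpoly.aeval ↥D α
  have hqbsep : qb.Separable := hsep.map
  have hqbder : qb.derivative.eval α ≠ 0 := by
    obtain ⟨u, v, huv⟩ := hqbsep
    intro h0
    have := congrArg (Polynomial.eval α) huv
    simp [hqbα, h0] at this
  -- approximate root
  obtain ⟨a₀, ha₀⟩ := residue_surjective (R := ↥O) α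
  have hev : Q.eval a₀ ∈ maximalIdeal ↥O := by
    have : residue ↥O (Q.eval a₀) = 0 := by rw [keyres, ha₀, hqbα]
    exact Ideal.Quotient.eq_zero_iff_mem.mp this
  have hder : IsUnit (Q.derivative.eval a₀) := by
    have h1 : residue ↥O (Q.derivative.eval a₀) ≠ 0 := by
      rw [hQ, derivative_map]
      have : residue ↥O ((q.derivative.map g₀).eval a₀)
          = (q.derivative.map D.subtype).eval (residue ↥O a₀) := by
        rw [eval_map, hom_eval₂, hres, ← eval_map]
      rw [this, ha₀, ← derivative_map, ← hqb]
      exact hqbder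
    by_contra hu
    exact h1 (Ideal.Quotient.eq_zero_iff_mem.mpr ((mem_maximalIdeal _).mpr hu))
  obtain ⟨a, haroot, hamem⟩ := HenselianLocalRing.is_henselian Q hQmonic a₀ hev hder
  have hares : residue ↥O a = α := by
    rw [← ha₀]
    exact Ideal.Quotient.mk_eq_mk_iff_sub_mem a a₀ |>.mpr hamem
  -- the algebra structure on K over D via g
  letI : Algebra ↥D K := g.toAlgebra
  have haK : (Polynomial.aeval (O.subtype a : K)) q = 0 := by
    have : (Polynomial.aeval (O.subtype a : K)) q = O.subtype (Q.eval a) := by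
      rw [hQ, eval_map, aeval_def, hom_eval₂, hsubg]
      rfl
    rw [this, show Q.eval a = 0 from haroot, map_zero]
  -- the algebra hom on D⟮α⟯
  let pb := IntermediateField.adjoin.powerBasis hint
  have hroot : (Polynomial.aeval (O.subtype a : K)) (minpoly ↥D pb.gen) = 0 := by
    rw [IntermediateField.adjoin.powerBasis_gen, IntermediateField.minpoly_gen]
    exact haK
  let φ : ↥D⟮α⟯ →ₐ[↥D] K := pb.lift (O.subtype a) hroot
  have hφgen : φ (AdjoinSimple.gen ↥D α) = O.subtype a := by
    have := pb.lift_gen (O.subtype a) hroot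
    rwa [IntermediateField.adjoin.powerBasis_gen] at this
  -- the new subfield and hom
  set D' : Subfield (ResidueField ↥O) := D⟮α⟯.toSubfield with hD'
  have hmem' : ∀ x : ResidueField ↥O, x ∈ D' ↔ x ∈ D⟮α⟯ := fun x => Iff.rfl
  let e : ↥D' →+* ↥D⟮α⟯ :=
    { toFun := fun x => ⟨x.1, (hmem' x.1).1 x.2⟩
      map_one' := rfl
      map_mul' := fun a b => rfl
      map_zero' := rfl
      map_add' := fun a b => rfl }
  let g' : ↥D' →+* K := φ.toRingHom.comp e
  have hDD' : D ≤ D' := by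
    intro x hx
    exact (hmem' x).2 (D⟮α⟯.algebraMap_mem ⟨x, hx⟩)
  have hαD' : α ∈ D' := (hmem' α).2 (IntermediateField.mem_adjoin_simple_self ↥D α)
  have hext : ∀ x : ↥D, g' (Subfield.inclusion hDD' x) = g x := by
    intro x
    have he : e (Subfield.inclusion hDD' x) = algebraMap ↥D D⟮α⟯ x := by
      apply Subtype.ext
      rfl
    show φ (e (Subfield.inclusion hDD' x)) = g x
    rw [he, φ.commutes]
    rfl
  have hD'F : D' ≤ F := by
    rw [hD', IntermediateField.adjoin_toSubfield]
    apply Subfield.closure_le.2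
    rintro x (⟨y, rfl⟩ | rfl)
    · exact hDF y.2
    · exact hαF
  refine ⟨D', g', hDD', hD'F, hαD', ?_, hext⟩
  apply isSec_of_le
  have hclos : D' = Subfield.closure (Set.range (algebraMap ↥D (ResidueField ↥O)) ∪ {α}) :=
    IntermediateField.adjoin_toSubfield ↥D {α}
  refine le_trans (le_of_eq hclos) (Subfield.closure_le.2 ?_)
  rintro x (⟨y, rfl⟩ | rfl)
  · refine (mem_secSubfield O).2 ⟨hDD' y.2, ?_⟩
    have : (⟨(algebraMap ↥D (ResidueField ↥O)) y, hDD' y.2⟩ : ↥D') = Subfield.inclusion hDD' y :=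
      Subtype.ext rfl
    rw [this, hext y]
    exact hsec y
  · refine (mem_secSubfield O).2 ⟨hαD', ?_⟩
    have hgen' : g' ⟨x, hαD'⟩ = O.subtype a := by
      show φ (e ⟨x, hαD'⟩) = O.subtype a
      have : e ⟨x, hαD'⟩ = AdjoinSimple.gen ↥D x := Subtype.ext rfl
      rw [this]
      exact hφgen
    rw [hgen']
    exact ⟨a.2, by rw [show (⟨O.subtype a, a.2⟩ : ↥O) = a from Subtype.ext rfl]; exact hares⟩

set_option synthInstance.maxHeartbeats 1000000 in
set_option maxHeartbeats 3000000 in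
theorem base_step {F E : Subfield (ResidueField ↥O)} (hEF : E ≤ F) (f : ↥E →+* K)
    (hf : IsSec O E f) (T : Set (ResidueField ↥O)) (hTF : T ⊆ (F : Set (ResidueField ↥O)))
    (hTind : AlgebraicIndependent ↥E ((↑) : T → (ResidueField ↥O))) :
    ∃ (E₁ : Subfield (ResidueField ↥O)) (g₁ : ↥E₁ →+* K) (hEE₁ : E ≤ E₁),
      E₁ ≤ F ∧ T ⊆ (E₁ : Set (ResidueField ↥O)) ∧ IsSec O E₁ g₁ ∧
      ∀ x : ↥E, g₁ (Subfield.inclusion hEE₁ x) = f x := by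
  classical
  -- lifts of the elements of T
  let u : T → ↥O := fun t => (residue_surjective (R := ↥O) t.1).choose
  have hu : ∀ t : T, residue ↥O (u t) = t.1 := fun t =>
    (residue_surjective (R := ↥O) t.1).choose_spec
  -- corestriction of f
  let f₀ : ↥E →+* ↥O :=
    { toFun := fun a => ⟨f a, (hf a).1⟩
      map_one' := Subtype.ext (map_one f)
      map_mul' := fun a b => Subtype.ext (f.map_mul a b)
      map_zero' := Subtype.ext (map_zero f)
      map_add' := fun a b => Subtype.ext (f.map_add a b) }
  letI : Algebra ↥E K := f.toAlgebra
  set A := MvPolynomial T ↥E with hA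
  let φ : A →ₐ[↥E] K := MvPolynomial.aeval (fun t => (O.subtype (u t)))
  let ψ : A →ₐ[↥E] (ResidueField ↥O) := MvPolynomial.aeval (fun t => (t : ResidueField ↥O))
  have hψinj : Function.Injective ψ := hTind
  let φ₀ : A →+* ↥O := MvPolynomial.eval₂Hom f₀ u
  have hsubφ : (O.subtype).comp φ₀ = φ.toRingHom := by
    apply MvPolynomial.ringHom_ext
    · intro a
      show O.subtype (MvPolynomial.eval₂Hom f₀ u (MvPolynomial.C a))
        = MvPolynomial.aeval (fun t : T => O.subtype (u t)) (MvPolynomial.C a)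
      rw [MvPolynomial.eval₂Hom_C, MvPolynomial.aeval_C]
      rfl
    · intro t
      show O.subtype (MvPolynomial.eval₂Hom f₀ u (MvPolynomial.X t))
        = MvPolynomial.aeval (fun t : T => O.subtype (u t)) (MvPolynomial.X t)
      rw [MvPolynomial.eval₂Hom_X', MvPolynomial.aeval_X]
  have hresφ : (residue ↥O).comp φ₀ = ψ.toRingHom := by
    apply MvPolynomial.ringHom_ext
    · intro a
      show residue ↥O (MvPolynomial.eval₂Hom f₀ u (MvPolynomial.C a))
        = MvPolynomial.aeval (fun t : T => (t : ResidueField ↥O)) (MvPolynomial.C a)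
      rw [MvPolynomial.eval₂Hom_C, MvPolynomial.aeval_C]
      exact (hf a).2
    · intro t
      show residue ↥O (MvPolynomial.eval₂Hom f₀ u (MvPolynomial.X t))
        = MvPolynomial.aeval (fun t : T => (t : ResidueField ↥O)) (MvPolynomial.X t)
      rw [MvPolynomial.eval₂Hom_X', MvPolynomial.aeval_X]
      exact hu t
  have hφinj : Function.Injective φ := by
    intro p q hpq
    have hs : ∀ r : A, O.subtype (φ₀ r) = φ r := fun r => by
      have := RingHom.congr_fun hsubφ r
      simpa using this
    have hr : ∀ r : A, residue ↥O (φ₀ r) = ψ r := fun r => by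
      have := RingHom.congr_fun hresφ r
      simpa using this
    have h1 : O.subtype (φ₀ p) = O.subtype (φ₀ q) := by rw [hs, hs]; exact hpq
    have h2 : φ₀ p = φ₀ q := Subtype.ext h1
    have h3 : ψ p = ψ q := by rw [← hr, ← hr, h2]
    exact hψinj h3
  -- fraction field machinery
  set FA := FractionRing A with hFA
  let Ψ : FA →ₐ[↥E] (ResidueField ↥O) := IsFractionRing.liftAlgHom hψinj
  let Φ : FA →ₐ[↥E] K := IsFractionRing.liftAlgHom hφinj
  have hΨA : ∀ p : A, Ψ (algebraMap A FA p) = ψ p := fun p =>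
    IsFractionRing.lift_algebraMap hψinj p
  have hΦA : ∀ p : A, Φ (algebraMap A FA p) = φ p := fun p =>
    IsFractionRing.lift_algebraMap hφinj p
  have hrange : Ψ.fieldRange = IntermediateField.adjoin ↥E T := by
    refine IsFractionRing.liftAlgHom_fieldRange_eq_of_range_eq hψinj ?_
    have h1 : Set.range ((↑) : T → (ResidueField ↥O)) = T := Subtype.range_coe
    rw [show ψ = MvPolynomial.aeval ((↑) : T → (ResidueField ↥O)) from rfl]
    rw [← Algebra.adjoin_range_eq_range_aeval, h1]
  set E₁ : Subfield (ResidueField ↥O) := (IntermediateField.adjoin ↥E T).toSubfield with hE₁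
  have hmem : ∀ x : ResidueField ↥O, x ∈ E₁ ↔ ∃ y : FA, Ψ y = x := by
    intro x
    constructor
    · intro hx
      have : x ∈ Ψ.fieldRange := hrange ▸ hx
      exact this
    · intro ⟨y, hy⟩
      have : x ∈ Ψ.fieldRange := ⟨y, hy⟩
      rw [hrange] at this
      exact this
  -- the hom on E₁
  have hchoice : ∀ x : ↥E₁, ∃ y : FA, Ψ y = (x : ResidueField ↥O) := fun x => (hmem x.1).1 x.2
  let c : ↥E₁ → FA := fun x => (hchoice x).choose
  have hc : ∀ x : ↥E₁, Ψ (c x) = (x : ResidueField ↥O) := fun x => (hchoice x).choose_spec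
  have hΨinj : Function.Injective Ψ := Ψ.toRingHom.injective
  have hcinj : ∀ (x : ↥E₁) (y : FA), Ψ y = (x : ResidueField ↥O) → c x = y :=
    fun x y hy => hΨinj (by rw [hc x, hy])
  let g₁ : ↥E₁ →+* K :=
    { toFun := fun x => Φ (c x)
      map_one' := by
        show Φ (c 1) = 1
        rw [hcinj 1 1 (by rw [map_one]; rfl), map_one]
      map_mul' := fun x y => by
        show Φ (c (x * y)) = Φ (c x) * Φ (c y)
        rw [hcinj (x * y) (c x * c y) (by rw [map_mul, hc, hc]; rfl), map_mul]
      map_zero' := by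
        show Φ (c 0) = 0
        rw [hcinj 0 0 (by rw [map_zero]; rfl), map_zero]
      map_add' := fun x y => by
        show Φ (c (x + y)) = Φ (c x) + Φ (c y)
        rw [hcinj (x + y) (c x + c y) (by rw [map_add, hc, hc]; rfl), map_add] }
  have hg₁Ψ : ∀ (y : FA) (hy : Ψ y ∈ E₁), g₁ ⟨Ψ y, hy⟩ = Φ y := by
    intro y hy
    show Φ (c ⟨Ψ y, hy⟩) = Φ y
    rw [hcinj _ y rfl]
  have hEE₁ : E ≤ E₁ := by
    intro x hx
    refine (hmem x).2 ⟨algebraMap ↥E FA ⟨x, hx⟩, ?_⟩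
    rw [AlgHom.commutes]
    rfl
  have hE₁F : E₁ ≤ F := by
    refine le_trans (le_of_eq (IntermediateField.adjoin_toSubfield ↥E T))
      (Subfield.closure_le.2 ?_)
    rintro x (⟨y, rfl⟩ | hxT)
    · exact hEF y.2
    · exact hTF hxT
  have hψX : ∀ t : T, ψ (MvPolynomial.X t) = (t : ResidueField ↥O) := fun t =>
    MvPolynomial.aeval_X _ t
  have hTE₁ : T ⊆ (E₁ : Set (ResidueField ↥O)) := by
    intro t ht
    refine (hmem t).2 ⟨algebraMap A FA (MvPolynomial.X (⟨t, ht⟩ : T)), ?_⟩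
    rw [hΨA]
    exact hψX ⟨t, ht⟩
  have hext : ∀ x : ↥E, g₁ (Subfield.inclusion hEE₁ x) = f x := by
    intro x
    have h1 : Ψ (algebraMap ↥E FA x) = (x : ResidueField ↥O) := by rw [AlgHom.commutes]; rfl
    have hy' : Ψ (algebraMap ↥E FA x) ∈ E₁ := by rw [h1]; exact hEE₁ x.2
    have h2 : Subfield.inclusion hEE₁ x = (⟨Ψ (algebraMap ↥E FA x), hy'⟩ : ↥E₁) :=
      Subtype.ext h1.symm
    rw [h2, hg₁Ψ _ hy', AlgHom.commutes]
    rfl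
  refine ⟨E₁, g₁, hEE₁, hE₁F, hTE₁, ?_, hext⟩
  apply isSec_of_le
  refine le_trans (le_of_eq (IntermediateField.adjoin_toSubfield ↥E T))
    (Subfield.closure_le.2 ?_)
  rintro x (⟨y, rfl⟩ | hxT)
  · refine (mem_secSubfield O).2 ⟨hEE₁ y.2, ?_⟩
    have h3 : (⟨(algebraMap ↥E (ResidueField ↥O) y), hEE₁ y.2⟩ : ↥E₁)
        = Subfield.inclusion hEE₁ y := Subtype.ext rfl
    rw [h3, hext y]
    exact hf y
  · refine (mem_secSubfield O).2 ⟨hTE₁ hxT, ?_⟩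
    have h1 : Ψ (algebraMap A FA (MvPolynomial.X (⟨x, hxT⟩ : T))) = x := by
      rw [hΨA]; exact hψX ⟨x, hxT⟩
    have hy' : Ψ (algebraMap A FA (MvPolynomial.X (⟨x, hxT⟩ : T))) ∈ E₁ := by
      rw [h1]; exact hTE₁ hxT
    have h2 : g₁ ⟨x, hTE₁ hxT⟩ = Φ (algebraMap A FA (MvPolynomial.X (⟨x, hxT⟩ : T))) := by
      rw [show (⟨x, hTE₁ hxT⟩ : ↥E₁)
        = ⟨Ψ (algebraMap A FA (MvPolynomial.X (⟨x, hxT⟩ : T))), hy'⟩ from Subtype.ext h1.symm]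
      exact hg₁Ψ _ hy'
    have h3 : φ (MvPolynomial.X (⟨x, hxT⟩ : T)) = O.subtype (u ⟨x, hxT⟩) :=
      MvPolynomial.aeval_X _ _
    rw [h2, hΦA, h3]
    refine ⟨(u ⟨x, hxT⟩).2, ?_⟩
    rw [show (⟨O.subtype (u ⟨x, hxT⟩), (u ⟨x, hxT⟩).2⟩ : ↥O) = u ⟨x, hxT⟩ from Subtype.ext rfl]
    exact hu ⟨x, hxT⟩

end PSE

open IsLocalRing PSE in
set_option synthInstance.maxHeartbeats 1000000 in
set_option maxHeartbeats 3000000 in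
/-- Extension of partial sections of the residue map of an equicharacteristic henselian valued
field along separably generated subextensions of the residue field. -/
theorem partial_section_extends (K : Type*) [Field K] (O : ValuationSubring K)
    [HenselianLocalRing ↥O]
    (hchar : ringChar K = ringChar (ResidueField ↥O))
    (E F : Subfield (ResidueField ↥O)) (hEF : E ≤ F)
    (f : ↥E →+* K)
    (hf : ∀ a : ↥E, ∃ h : f a ∈ O, residue ↥O ⟨f a, h⟩ = (a : ResidueField ↥O))
    (hsepgen : letI := (Subfield.inclusion hEF).toAlgebra
      ∃ s : Set ↥F, AlgebraicIndependent ↥E ((↑) : s → ↥F) ∧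
        Algebra.IsSeparable (IntermediateField.adjoin ↥E s) ↥F) :
    ∃ g : ↥F →+* K,
      (∀ a : ↥F, ∃ h : g a ∈ O, residue ↥O ⟨g a, h⟩ = (a : ResidueField ↥O)) ∧
      ∀ a : ↥E, g (Subfield.inclusion hEF a) = f a := by
  classical
  letI := (Subfield.inclusion hEF).toAlgebra
  obtain ⟨s, hind, hsep⟩ := hsepgen
  -- transport algebraic independence to the residue field
  let ι : ↥F →ₐ[↥E] ResidueField ↥O :=
    { toRingHom := F.subtype, commutes' := fun r => rfl }
  have hιinj : Function.Injective ι := Subtype.val_injective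
  have hfam : AlgebraicIndependent ↥E (⇑ι ∘ ((↑) : s → ↥F)) := hind.map' hιinj
  set T := Set.range (⇑ι ∘ ((↑) : s → ↥F)) with hT
  have hTind : AlgebraicIndependent ↥E ((↑) : T → ResidueField ↥O) := hfam.to_subtype_range
  have hTF : T ⊆ (F : Set (ResidueField ↥O)) := by rintro x ⟨y, rfl⟩; exact (y.1 : ↥F).2
  have hfsec : IsSec O E f := hf
  obtain ⟨E₁, g₁, hEE₁, hE₁F, hTE₁, hsec₁, hext₁⟩ := base_step O hEF f hfsec T hTF hTind
  -- Zorn's lemma on good graphs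
  set R₁ := graphOf O E₁ g₁ with hR₁
  have hR₁good : Good O F R₁ := graphOf_good O hE₁F hsec₁
  set 𝒮 : Set (Subring (ResidueField ↥O × K)) := {R | Good O F R ∧ R₁ ≤ R} with h𝒮
  have hzorn : ∀ c ⊆ 𝒮, IsChain (· ≤ ·) c → ∀ y ∈ c,
      ∃ ub ∈ 𝒮, ∀ z ∈ c, z ≤ ub := by
    intro c hc𝒮 hchain y hyc
    haveI : Nonempty c := ⟨⟨y, hyc⟩⟩
    have hdir : Directed (· ≤ ·) (fun R : c => (R : Subring (ResidueField ↥O × K))) :=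
      directedOn_iff_directed.mp hchain.directedOn
    have hmem : ∀ p, p ∈ (⨆ R : c, (R : Subring (ResidueField ↥O × K))) ↔
        ∃ R : c, p ∈ (R : Subring (ResidueField ↥O × K)) :=
      fun p => Subring.mem_iSup_of_directed hdir
    refine ⟨⨆ R : c, (R : Subring (ResidueField ↥O × K)), ⟨⟨?_, ?_, ?_, ?_⟩, ?_⟩,
      fun z hz => le_iSup (fun R : c => (R : Subring (ResidueField ↥O × K))) ⟨z, hz⟩⟩
    · intro p hp; obtain ⟨R, hR⟩ := (hmem p).1 hp; exact (hc𝒮 R.2).1.1 p hR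
    · intro p hp; obtain ⟨R, hR⟩ := (hmem p).1 hp; exact (hc𝒮 R.2).1.2.1 p hR
    · intro p hp h0
      obtain ⟨R, hR⟩ := (hmem p).1 hp
      exact (hmem _).2 ⟨R, (hc𝒮 R.2).1.2.2.1 p hR h0⟩
    · intro y' hy'
      obtain ⟨R, hR⟩ := (hmem _).1 hy'
      exact (hc𝒮 R.2).1.2.2.2 y' hR
    · exact le_trans (hc𝒮 hyc).2
        (le_iSup (fun R : c => (R : Subring (ResidueField ↥O × K))) ⟨y, hyc⟩)
  obtain ⟨M, hR₁M, hMmax⟩ := zorn_le_nonempty₀ 𝒮 hzorn R₁ ⟨hR₁good, le_rfl⟩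
  have hM : Good O F M := hMmax.prop.1
  set D := domOf O M hM with hD
  set g := homOfGraph O hM with hg
  have hsecD : IsSec O D g := fun a => hM.2.1 _ (homOfGraph_mem O hM a)
  have hDF : D ≤ F := by
    intro x hx
    obtain ⟨y, hy⟩ := (mem_domOf O).1 hx
    exact hM.1 (x, y) hy
  have hE₁D : E₁ ≤ D := fun x hx =>
    (mem_domOf O).2 ⟨g₁ ⟨x, hx⟩, hR₁M ((mem_graphOf O).2 ⟨⟨x, hx⟩, rfl⟩)⟩
  have hED : E ≤ D := le_trans hEE₁ hE₁D
  -- maximality forces D = F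
  have hFD : F ≤ D := by
    by_contra hcon
    obtain ⟨α, hαF, hαD⟩ : ∃ α, α ∈ F ∧ α ∉ D := by
      by_contra h
      push_neg at h
      exact hcon h
    -- the element is separable algebraic over D
    have hsD : ∀ x : ↥F, x ∈ s → ((x : ResidueField ↥O) ∈ D) := fun x hx =>
      hE₁D (hTE₁ ⟨⟨x, hx⟩, rfl⟩)
    have hMD : ∀ m : ↥(IntermediateField.adjoin ↥E s), ((m : ↥F) : ResidueField ↥O) ∈ D := by
      intro m
      have h1 : (IntermediateField.adjoin ↥E s).toSubfield ≤ D.comap F.subtype := by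
        refine le_trans (le_of_eq (IntermediateField.adjoin_toSubfield ↥E s))
          (Subfield.closure_le.2 ?_)
        rintro x (⟨y, rfl⟩ | hxs)
        · exact hED y.2
        · exact hsD x hxs
      exact h1 m.2
    let τ : ↥(IntermediateField.adjoin ↥E s) →+* ↥D :=
      { toFun := fun m => ⟨((m : ↥F) : ResidueField ↥O), hMD m⟩
        map_one' := Subtype.ext rfl
        map_mul' := fun a b => Subtype.ext rfl
        map_zero' := Subtype.ext rfl
        map_add' := fun a b => Subtype.ext rfl }
    set αF : ↥F := ⟨α, hαF⟩ with hαFdef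
    set p := minpoly ↥(IntermediateField.adjoin ↥E s) αF with hp
    have hpsep : p.Separable := Algebra.IsSeparable.isSeparable _ αF
    have hpint : IsIntegral ↥(IntermediateField.adjoin ↥E s) αF :=
      Algebra.IsSeparable.isIntegral _ αF
    have hev : Polynomial.aeval α (p.map τ) = 0 := by
      rw [Polynomial.aeval_def, Polynomial.eval₂_map]
      have hcomp : (algebraMap ↥D (ResidueField ↥O)).comp τ
          = (F.subtype).comp (algebraMap ↥(IntermediateField.adjoin ↥E s) ↥F) :=
        RingHom.ext fun m => rfl
      rw [hcomp]
      have h2 := Polynomial.hom_eval₂ p (algebraMap ↥(IntermediateField.adjoin ↥E s) ↥F)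
        F.subtype αF
      rw [show F.subtype αF = α from rfl] at h2
      rw [← h2, ← Polynomial.aeval_def, minpoly.aeval, map_zero]
    have hint : IsIntegral ↥D α :=
      ⟨p.map τ, (minpoly.monic hpint).map τ, by rwa [Polynomial.aeval_def] at hev⟩
    have hsepα : (minpoly ↥D α).Separable :=
      (hpsep.map (f := τ)).of_dvd (minpoly.dvd ↥D α hev)
    obtain ⟨D', g', hDD', hD'F, hαD', hsec', hext'⟩ :=
      hensel_step O hDF hsecD hαF hint hsepα
    have hMM' : M ≤ graphOf O D' g' := by
      intro q hq
      have hq1 : q.1 ∈ D := (mem_domOf O).2 ⟨q.2, by rwa [show (q.1, q.2) = q from rfl]⟩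
      refine (mem_graphOf O).2 ⟨Subfield.inclusion hDD' ⟨q.1, hq1⟩, ?_⟩
      have h2 : g' (Subfield.inclusion hDD' ⟨q.1, hq1⟩) = q.2 := by
        rw [hext']
        exact homOfGraph_eq O hM (by rwa [show (q.1, q.2) = q from rfl]) hq1
      rw [h2]
      exact Prod.ext rfl rfl
    have heq : graphOf O D' g' ≤ M :=
      hMmax.2 ⟨graphOf_good O hD'F hsec', le_trans hR₁M hMM'⟩ hMM'
    apply hαD
    refine (mem_domOf O).2 ⟨g' ⟨α, hαD'⟩, heq ((mem_graphOf O).2 ⟨⟨α, hαD'⟩, rfl⟩)⟩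
  -- conclude
  refine ⟨g.comp (Subfield.inclusion hFD), ?_, ?_⟩
  · intro a
    exact hsecD (Subfield.inclusion hFD a)
  · intro a
    have hm1 : ((a : ResidueField ↥O), f a) ∈ M := by
      have h0 : ((a : ResidueField ↥O), f a) ∈ R₁ := by
        refine (mem_graphOf O).2 ⟨Subfield.inclusion hEE₁ a, ?_⟩
        rw [hext₁ a]
        rfl
      exact hR₁M h0
    show g (Subfield.inclusion hFD (Subfield.inclusion hEF a)) = f a
    have h3 : Subfield.inclusion hFD (Subfield.inclusion hEF a)
        = ⟨(a : ResidueField ↥O), hED a.2⟩ := Subtype.ext rfl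
    rw [h3]
    exact homOfGraph_eq O hM hm1 (hED a.2)
end

section
/- Let (K,v) be an equicharacteristic henselian valued field and L ⊆ K a subfield on which v is trivial. Then the restriction of the residue map to the relative separable algebraic closure L₂ of L in K is an isomorphism onto the relative separable algebraic closure of Lv in Kv; in particular, the residue field of a henselian valued field contains no element separably algebraic over Lv outside L₂v. -/
open IsLocalRing Polynomial

set_option maxHeartbeats 1000000 in
set_option synthInstance.maxHeartbeats 400000 in
/-- Auxiliary: an element of `K` integral over the valuation subring `O` lies in `O`. -/
theorem ValuationSubring.mem_of_isIntegral' {K : Type*} [Field K] (O : ValuationSubring K)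
    (x : K) (h : IsIntegral ↥O x) : x ∈ O := by
  obtain ⟨y, hy⟩ := IsIntegrallyClosed.isIntegral_iff.mp h
  exact hy ▸ y.2

set_option maxHeartbeats 2000000 in
set_option synthInstance.maxHeartbeats 1000000 in
/-- Let `(K, O)` be an equicharacteristic henselian valued field and `L ⊆ K` a subfield on which
the valuation is trivial. Then the residue map restricts to an isomorphism (here spelled out as:
well-defined, injective, and surjective) from the relative separable algebraic closure `L₂` of
`L` in `K` onto the relative separable algebraic closure of `Lv` in the residue field `Kv`. -/
theorem residue_map_iso_on_separable_closure (K : Type*) [Field K] (O : ValuationSubring K)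
    [HenselianLocalRing ↥O]
    (hchar : ringChar K = ringChar (ResidueField ↥O))
    (L : Subfield K)
    (htriv : ∀ a : ↥L, (a : K) ≠ 0 → ((a : K) ∈ O ∧ ((a : K))⁻¹ ∈ O)) :
    ∃ Lv : Subfield (ResidueField ↥O),
      -- `Lv` is the image of `L` under the residue map
      (∀ y : ResidueField ↥O,
        y ∈ Lv ↔ ∃ (a : ↥L) (h : (a : K) ∈ O), residue ↥O ⟨a, h⟩ = y) ∧
      -- elements of `K` separably algebraic over `L` lie in the valuation ring
      (∀ x : K, IsSeparable ↥L x → x ∈ O) ∧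
      -- the residue map is injective on the separable algebraic closure of `L` in `K`
      (∀ (x₁ x₂ : K), IsSeparable ↥L x₁ → IsSeparable ↥L x₂ →
        ∀ (h₁ : x₁ ∈ O) (h₂ : x₂ ∈ O),
          residue ↥O ⟨x₁, h₁⟩ = residue ↥O ⟨x₂, h₂⟩ → x₁ = x₂) ∧
      -- its image is exactly the separable algebraic closure of `Lv` in the residue field:
      -- residues of separably algebraic elements are separably algebraic over `Lv` ...
      (∀ (x : K) (hx : x ∈ O), IsSeparable ↥L x → IsSeparable ↥Lv (residue ↥O ⟨x, hx⟩)) ∧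
      -- ... and every element of `Kv` separably algebraic over `Lv` is such a residue
      (∀ y : ResidueField ↥O, IsSeparable ↥Lv y →
        ∃ (x : K) (hx : x ∈ O), IsSeparable ↥L x ∧ residue ↥O ⟨x, hx⟩ = y) := by
  -- every element of `L` lies in `O`
  have hL : ∀ a : ↥L, (a : K) ∈ O := by
    intro a
    by_cases h : (a : K) = 0
    · rw [h]; exact zero_mem O
    · exact (htriv a h).1
  -- the inclusion `L →+* O`
  let ι : ↥L →+* ↥O :=
    { toFun := fun a => ⟨(a : K), hL a⟩
      map_one' := by ext; simp
      map_mul' := fun a b => by ext; simp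
      map_zero' := by ext; simp
      map_add' := fun a b => by ext; simp }
  -- the composite `L →+* Kv`
  let f : ↥L →+* ResidueField ↥O := (residue ↥O).comp ι
  have hcompL : (algebraMap ↥O K).comp ι = algebraMap ↥L K := by ext a; rfl
  -- integral elements over `L` lie in `O`
  have hmem : ∀ x : K, IsIntegral ↥L x → x ∈ O := by
    intro x hx
    apply O.mem_of_isIntegral'
    obtain ⟨p, hpm, hpx⟩ := hx
    refine ⟨p.map ι, hpm.map ι, ?_⟩
    rw [eval₂_map, hcompL]
    exact hpx
  -- nonzero integral elements over `L` have nonzero residue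
  have hne : ∀ (z : K) (_ : z ≠ 0) (_ : IsIntegral ↥L z) (hzO : z ∈ O),
      residue ↥O ⟨z, hzO⟩ ≠ 0 := by
    intro z hz0 hz hzO h
    have h1 : (⟨z, hzO⟩ : ↥O) ∈ maximalIdeal ↥O := Ideal.Quotient.eq_zero_iff_mem.mp h
    have hzinv : z⁻¹ ∈ O :=
      hmem _ ((isAlgebraic_iff_isIntegral.mpr hz).inv.isIntegral)
    have hu : IsUnit (⟨z, hzO⟩ : ↥O) := by
      refine IsUnit.of_mul_eq_one (a := (⟨z, hzO⟩ : ↥O)) ⟨z⁻¹, hzinv⟩ ?_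
      ext
      exact mul_inv_cancel₀ hz0
    exact (IsLocalRing.mem_maximalIdeal _).mp h1 hu
  -- the image subfield
  refine ⟨f.fieldRange, ?_, ?_, ?_, ?_, ?_⟩
  · -- description of the image
    intro y
    constructor
    · rintro ⟨a, rfl⟩
      exact ⟨a, hL a, rfl⟩
    · rintro ⟨a, h, rfl⟩
      refine ⟨a, ?_⟩
      show residue ↥O (ι a) = residue ↥O ⟨(a : K), h⟩
      congr 1
  · -- separable elements lie in `O`
    intro x hx
    exact hmem x hx.isIntegral
  · -- injectivity
    intro x₁ x₂ hs₁ hs₂ h₁ h₂ hres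
    by_contra hne'
    have hz0 : x₁ - x₂ ≠ 0 := sub_ne_zero_of_ne hne'
    have hzint : IsIntegral ↥L (x₁ - x₂) := hs₁.isIntegral.sub hs₂.isIntegral
    refine hne _ hz0 hzint (sub_mem h₁ h₂) ?_
    have : (⟨x₁ - x₂, sub_mem h₁ h₂⟩ : ↥O) = (⟨x₁, h₁⟩ : ↥O) - ⟨x₂, h₂⟩ := by ext; rfl
    rw [this, map_sub, hres, sub_self]
  · -- residues of separable elements are separable over the image
    intro x hx hsep
    have hsep' : (minpoly ↥L x).Separable := hsep
    -- restrict the codomain of `f` to its field range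
    let g : ↥L →+* ↥f.fieldRange := f.codRestrict f.fieldRange.toSubring fun a =>
      f.mem_fieldRange_self a
    have hcomp : (algebraMap ↥f.fieldRange (ResidueField ↥O)).comp g = f := by ext a; rfl
    have hroot : aeval (residue ↥O ⟨x, hx⟩) ((minpoly ↥L x).map g) = 0 := by
      rw [aeval_def, eval₂_map, hcomp]
      show eval₂ ((residue ↥O).comp ι) (residue ↥O ⟨x, hx⟩) (minpoly ↥L x) = 0
      rw [← hom_eval₂]
      have : eval₂ ι (⟨x, hx⟩ : ↥O) (minpoly ↥L x) = 0 := by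
        apply Subtype.coe_injective
        show (algebraMap ↥O K) (eval₂ ι (⟨x, hx⟩ : ↥O) (minpoly ↥L x)) = (0 : K)
        rw [hom_eval₂, hcompL]
        exact minpoly.aeval ↥L x
      rw [this, map_zero]
    show (minpoly ↥f.fieldRange (residue ↥O ⟨x, hx⟩)).Separable
    exact (hsep'.map (f := g)).of_dvd (minpoly.dvd _ _ hroot)
  · -- surjectivity onto separable elements of the residue field
    intro y hsep
    have hsep' : (minpoly ↥f.fieldRange y).Separable := hsep
    set q := minpoly ↥f.fieldRange y with hq
    have hq0 : aeval y q = 0 := minpoly.aeval _ _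
    have hqint : IsIntegral ↥f.fieldRange y := hsep.isIntegral
    have hqmonic : q.Monic := minpoly.monic hqint
    -- the isomorphism `L ≃+* Lv`
    let g : ↥L →+* ↥f.fieldRange := f.codRestrict f.fieldRange.toSubring fun a =>
      f.mem_fieldRange_self a
    have hcomp : (algebraMap ↥f.fieldRange (ResidueField ↥O)).comp g = f := by ext a; rfl
    have hgbij : Function.Bijective g := by
      constructor
      · exact g.injective
      · rintro ⟨y', a, ha⟩
        exact ⟨a, Subtype.ext ha⟩
    let e : ↥L ≃+* ↥f.fieldRange := RingEquiv.ofBijective g hgbij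
    have hge : ∀ a : ↥L, g a = e a := fun a => rfl
    have hfe : f.comp (e.symm : ↥f.fieldRange →+* ↥L)
        = algebraMap ↥f.fieldRange (ResidueField ↥O) := by
      ext a
      show ((g (e.symm a) : ↥f.fieldRange) : ResidueField ↥O) = ((a : ↥f.fieldRange) : ResidueField ↥O)
      congr 1
      rw [hge]
      exact e.apply_symm_apply a
    -- pull back the minimal polynomial to `L` and then to `O`
    set p : Polynomial ↥L := q.map (e.symm : ↥f.fieldRange →+* ↥L) with hp
    have hpmonic : p.Monic := hqmonic.map _
    set P : Polynomial ↥O := p.map ι with hP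
    have hPmonic : P.Monic := hpmonic.map _
    -- residues of evaluations of `P`
    have hres : ∀ a : ↥O, residue ↥O (P.eval a) = aeval (residue ↥O a) q := by
      intro a
      rw [hP, eval_map, hom_eval₂]
      show eval₂ f (residue ↥O a) p = _
      rw [hp, eval₂_map]
      rw [hfe, aeval_def]
    have hresD : ∀ a : ↥O, residue ↥O (P.derivative.eval a) = aeval (residue ↥O a) q.derivative := by
      intro a
      have : P.derivative = (q.derivative.map (e.symm : ↥f.fieldRange →+* ↥L)).map ι := by
        rw [hP, derivative_map, hp, derivative_map]
      rw [this, eval_map, hom_eval₂]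
      show eval₂ f (residue ↥O a) (q.derivative.map (e.symm : ↥f.fieldRange →+* ↥L)) = _
      rw [eval₂_map]
      rw [hfe, aeval_def]
    -- a lift of `y`
    obtain ⟨a₀, ha₀⟩ := Ideal.Quotient.mk_surjective (I := maximalIdeal ↥O) y
    have ha₀' : residue ↥O a₀ = y := ha₀
    -- the derivative of `q` does not vanish at `y`
    have hder : aeval y q.derivative ≠ 0 := by
      obtain ⟨A, B, hAB⟩ := hsep'
      have := congrArg (aeval y) hAB
      simp only [map_add, map_mul, map_one, hq0, mul_zero, zero_add] at this
      intro h0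
      rw [h0, mul_zero] at this
      exact zero_ne_one this
    -- Hensel's lemma applies
    have h1 : P.eval a₀ ∈ maximalIdeal ↥O := by
      rw [← Ideal.Quotient.eq_zero_iff_mem]
      show residue ↥O (P.eval a₀) = 0
      rw [hres, ha₀', hq0]
    have h2 : IsUnit (P.derivative.eval a₀) := by
      by_contra hnu
      have : P.derivative.eval a₀ ∈ maximalIdeal ↥O := (IsLocalRing.mem_maximalIdeal _).mpr hnu
      have : residue ↥O (P.derivative.eval a₀) = 0 := Ideal.Quotient.eq_zero_iff_mem.mpr this
      rw [hresD, ha₀'] at this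
      exact hder this
    obtain ⟨a, haroot, hamem⟩ := HenselianLocalRing.is_henselian P hPmonic a₀ h1 h2
    -- the root `a` is the desired element
    refine ⟨(a : K), a.2, ?_, ?_⟩
    · -- separability over `L`
      show (minpoly ↥L (a : K)).Separable
      have haev : aeval (a : K) p = 0 := by
        have : (algebraMap ↥O K) (P.eval a) = 0 := by rw [haroot.eq_zero, map_zero]
        rw [hP, eval_map, hom_eval₂, hcompL] at this
        rw [aeval_def]
        exact this
      have hpsep : p.Separable := hsep'.map
      exact hpsep.of_dvd (minpoly.dvd _ _ haev)
    · -- the residue of `a` is `y`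
      have : residue ↥O a - residue ↥O a₀ = 0 := by
        rw [← map_sub]
        exact Ideal.Quotient.eq_zero_iff_mem.mpr hamem
      have h4 : residue ↥O a = y := by
        rw [sub_eq_zero] at this
        rw [this, ha₀']
      show residue ↥O ⟨(a : K), a.2⟩ = y
      convert h4
end

section
/- Let A be a complete discrete valuation ring of equal characteristic, F ⊆ A a set of representatives of the residue classes that forms a field, and s ∈ A a uniformizer. Then A is isomorphic to the formal power series ring F[[s]] by an isomorphism fixing F pointwise. -/
open IsLocalRing PowerSeries Finset

namespace CompleteDvrIso

variable {A : Type*} [CommRing A] (F : Subring A) (s : A)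

/-- Partial sum: evaluate the `n`-th truncation of `f` at `s`. -/
noncomputable def P (n : ℕ) (f : PowerSeries F) : A :=
  Polynomial.eval₂ F.subtype s (trunc n f)

lemma P_eq_sum (n : ℕ) (f : PowerSeries F) :
    P F s n f = ∑ i ∈ range n, ((PowerSeries.coeff i f : F) : A) * s ^ i :=
  eval₂_trunc_eq_sum_range s F.subtype n f

lemma dvd_eval₂ (n : ℕ) (p : Polynomial F) (h : ∀ d < n, p.coeff d = 0) :
    s ^ n ∣ Polynomial.eval₂ F.subtype s p := by
  obtain ⟨q, hq⟩ := Polynomial.X_pow_dvd_iff.mpr h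
  rw [hq, Polynomial.eval₂_mul, Polynomial.eval₂_X_pow]
  exact Dvd.intro _ rfl

lemma P_add (n : ℕ) (f g : PowerSeries F) : P F s n (f + g) = P F s n f + P F s n g := by
  simp [P, map_add, Polynomial.eval₂_add]

lemma P_zero (n : ℕ) : P F s n 0 = 0 := by simp [P, map_zero]

lemma dvd_P_mul (n : ℕ) (f g : PowerSeries F) :
    s ^ n ∣ P F s n f * P F s n g - P F s n (f * g) := by
  have : P F s n f * P F s n g - P F s n (f * g)
      = Polynomial.eval₂ F.subtype s (trunc n f * trunc n g - trunc n (f * g)) := by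
    rw [Polynomial.eval₂_sub, Polynomial.eval₂_mul]; rfl
  rw [this]
  apply dvd_eval₂
  intro d hd
  have key := trunc_trunc_mul_trunc (n := n) f g
  have h1 : (trunc n f * trunc n g).coeff d
      = (PowerSeries.coeff d) ((trunc n f : PowerSeries F) * (trunc n g : PowerSeries F)) := by
    rw [← Polynomial.coe_mul, Polynomial.coeff_coe]
  have h2 : (PowerSeries.coeff d) ((trunc n f : PowerSeries F) * (trunc n g : PowerSeries F))
      = PowerSeries.coeff d (f * g) := by
    have h3 := congrArg (fun p => Polynomial.coeff p d) key
    simp only [coeff_trunc] at h3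
    rwa [if_pos hd, if_pos hd] at h3
  rw [Polynomial.coeff_sub, h1, h2, coeff_trunc, if_pos hd, sub_self]

lemma dvd_P_sub (m n : ℕ) (hmn : m ≤ n) (f : PowerSeries F) :
    s ^ m ∣ P F s n f - P F s m f := by
  have : P F s n f - P F s m f = Polynomial.eval₂ F.subtype s (trunc n f - trunc m f) := by
    rw [Polynomial.eval₂_sub]; rfl
  rw [this]
  apply dvd_eval₂
  intro d hd
  rw [Polynomial.coeff_sub, coeff_trunc, coeff_trunc, if_pos hd, if_pos (lt_of_lt_of_le hd hmn),
    sub_self]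

set_option linter.unusedSectionVars false

variable [IsDomain A] [IsDiscreteValuationRing A] [IsAdicComplete (maximalIdeal A) A]

lemma smodeq_iff {s : A} (hs : Irreducible s) (n : ℕ) (x y : A) :
    x ≡ y [SMOD (maximalIdeal A ^ n • ⊤ : Submodule A A)] ↔ s ^ n ∣ x - y := by
  rw [SModEq.sub_mem, smul_eq_mul, Ideal.mul_top, hs.maximalIdeal_eq,
    Ideal.span_singleton_pow, Ideal.mem_span_singleton]

/-- The limit of the partial sums of `f` evaluated at `s`. -/
noncomputable def phi {s : A} (hs : Irreducible s) (f : PowerSeries F) : A :=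
  Classical.choose (IsPrecomplete.prec (IsAdicComplete.toIsPrecomplete (I := maximalIdeal A))
    (f := fun n => P F s n f) (by
      intro m n hmn
      rw [smodeq_iff hs]
      exact (neg_sub (P F s n f) (P F s m f)) ▸ (dvd_P_sub F s m n hmn f).neg_right))

lemma phi_spec {s : A} (hs : Irreducible s) (f : PowerSeries F) : ∀ n, s ^ n ∣ phi F hs f - P F s n f := by
  intro n
  have := Classical.choose_spec (IsPrecomplete.prec
    (IsAdicComplete.toIsPrecomplete (I := maximalIdeal A))
    (f := fun n => P F s n f) (by
      intro m n hmn
      rw [smodeq_iff hs]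
      exact (neg_sub (P F s n f) (P F s m f)) ▸ (dvd_P_sub F s m n hmn f).neg_right)) n
  rw [smodeq_iff hs] at this
  exact (neg_sub (P F s n f) (phi F hs f)) ▸ this.neg_right

lemma phi_unique {s : A} (hs : Irreducible s) (f : PowerSeries F) (x : A) (hx : ∀ n, s ^ n ∣ x - P F s n f) :
    x = phi F hs f := by
  rw [← sub_eq_zero]
  refine IsHausdorff.haus (IsAdicComplete.toIsHausdorff (I := maximalIdeal A)) _ (fun n => ?_)
  rw [SModEq.zero, smul_eq_mul, Ideal.mul_top, hs.maximalIdeal_eq, Ideal.span_singleton_pow,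
    Ideal.mem_span_singleton]
  have h1 := hx n
  have h2 := phi_spec F hs f n
  have : x - phi F hs f = (x - P F s n f) - (phi F hs f - P F s n f) := by ring
  rw [this]
  exact dvd_sub h1 h2



/-- The evaluation ring hom `F[[X]] → A` at `s`. -/
noncomputable def Phi {s : A} (hs : Irreducible s) : PowerSeries F →+* A where
  toFun := phi F hs
  map_one' := by
    refine (phi_unique F hs 1 1 fun n => ?_).symm
    match n with
    | 0 => rw [pow_zero]; exact one_dvd _
    | m + 1 =>
      have : P F s (m + 1) (1 : PowerSeries F) = 1 := by
        rw [P, trunc_one, Polynomial.eval₂_one]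
      rw [this, sub_self]; exact dvd_zero _
  map_mul' f g := by
    refine (phi_unique F hs (f * g) (phi F hs f * phi F hs g) fun n => ?_).symm
    have h1 := phi_spec F hs f n
    have h2 := phi_spec F hs g n
    have h3 := dvd_P_mul F s n f g
    have : phi F hs f * phi F hs g - P F s n (f * g)
        = phi F hs f * (phi F hs g - P F s n g) + (phi F hs f - P F s n f) * P F s n g
          + (P F s n f * P F s n g - P F s n (f * g)) := by ring
    rw [this]
    exact dvd_add (dvd_add (Dvd.dvd.mul_left h2 _) (Dvd.dvd.mul_right h1 _)) h3
  map_zero' := (phi_unique F hs 0 0 fun n => by rw [P_zero, sub_zero]; exact dvd_zero _).symm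
  map_add' f g := by
    refine (phi_unique F hs (f + g) (phi F hs f + phi F hs g) fun n => ?_).symm
    have h1 := phi_spec F hs f n
    have h2 := phi_spec F hs g n
    have : phi F hs f + phi F hs g - P F s n (f + g)
        = (phi F hs f - P F s n f) + (phi F hs g - P F s n g) := by rw [P_add]; ring
    rw [this]
    exact dvd_add h1 h2

lemma Phi_X {s : A} (hs : Irreducible s) : Phi F hs X = s := by
  refine (phi_unique F hs X s fun n => ?_).symm
  match n with
  | 0 => rw [pow_zero]; exact one_dvd _
  | 1 =>
    have : P F s 1 (X : PowerSeries F) = 0 := by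
      rw [P_eq_sum]
      simp
    rw [this, sub_zero, pow_one]
  | m + 2 =>
    have : P F s (m + 2) (X : PowerSeries F) = s := by
      rw [P, trunc_X_of (by omega), Polynomial.eval₂_X]
    rw [this, sub_self]; exact dvd_zero _

lemma Phi_C {s : A} (hs : Irreducible s) (x : F) : Phi F hs (PowerSeries.C (R := F) x) = (x : A) := by
  refine (phi_unique F hs (PowerSeries.C (R := F) x) (x : A) fun n => ?_).symm
  match n with
  | 0 => rw [pow_zero]; exact one_dvd _
  | m + 1 =>
    have : P F s (m + 1) (PowerSeries.C (R := F) x) = (x : A) := by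
      rw [P, trunc_C, Polynomial.eval₂_C]; rfl
    rw [this, sub_self]; exact dvd_zero _

end CompleteDvrIso

/-- The digit sequence of remainders. -/
noncomputable def CompleteDvrIso.seq {A : Type*} [CommRing A] (s : A) (rep : A → A)
    (hstep : ∀ b : A, ∃ c : A, b - rep b = s * c) (a : A) : ℕ → A
  | 0 => a
  | n + 1 => Classical.choose (hstep (CompleteDvrIso.seq s rep hstep a n))

lemma CompleteDvrIso.seq_spec {A : Type*} [CommRing A] (s : A) (rep : A → A)
    (hstep : ∀ b : A, ∃ c : A, b - rep b = s * c) (a : A) (n : ℕ) :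
    CompleteDvrIso.seq s rep hstep a n - rep (CompleteDvrIso.seq s rep hstep a n)
      = s * CompleteDvrIso.seq s rep hstep a (n + 1) :=
  Classical.choose_spec (hstep (CompleteDvrIso.seq s rep hstep a n))

open CompleteDvrIso in
/-- Let `A` be a complete discrete valuation ring of equal characteristic, `F ⊆ A` a subring
which is a field of representatives of the residue classes, and `s ∈ A` a uniformizer. Then `A`
is isomorphic to the power series ring `F[[s]]` by an isomorphism sending `s` to the variable
and fixing `F` pointwise. -/
theorem complete_dvr_iso_powerSeries (A : Type*) [CommRing A] [IsDomain A]
    [IsDiscreteValuationRing A] [IsAdicComplete (maximalIdeal A) A]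
    (hchar : ringChar A = ringChar (ResidueField A))
    (F : Subring A) (hF : IsField ↥F)
    (hrep : Function.Bijective (fun x : ↥F => residue A (x : A)))
    (s : A) (hs : Irreducible s) :
    ∃ e : A ≃+* PowerSeries ↥F,
      e s = PowerSeries.X ∧ ∀ x : ↥F, e (x : A) = PowerSeries.C (R := ↥F) x := by
  classical
  set Φ := Phi F hs with hΦ
  -- the constant coefficient of anything in the kernel vanishes
  have hconst : ∀ f : PowerSeries ↥F, Φ f = 0 → PowerSeries.coeff 0 f = 0 := by
    intro f hf
    have h1 := phi_spec F hs f 1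
    have hP1 : P F s 1 f = ((PowerSeries.coeff 0 f : ↥F) : A) := by
      rw [P_eq_sum]; simp
    have hdvd : s ∣ ((PowerSeries.coeff 0 f : ↥F) : A) := by
      have h2 : phi F hs f = 0 := hf
      rw [pow_one, h2, zero_sub, dvd_neg, hP1] at h1
      exact h1
    have hmem : ((PowerSeries.coeff 0 f : ↥F) : A) ∈ maximalIdeal A := by
      rw [hs.maximalIdeal_eq, Ideal.mem_span_singleton]; exact hdvd
    have hres : residue A ((PowerSeries.coeff 0 f : ↥F) : A) = 0 :=
      Ideal.Quotient.eq_zero_iff_mem.mpr hmem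
    apply hrep.injective
    simp only [hres, ZeroMemClass.coe_zero, map_zero]
  have inj : Function.Injective Φ := by
    rw [injective_iff_map_eq_zero]
    intro f hf
    have key : ∀ n : ℕ, ∀ g : PowerSeries ↥F, Φ g = 0 → PowerSeries.coeff n g = 0 := by
      intro n
      induction n with
      | zero => exact hconst
      | succ n ih =>
        intro g hg
        have h0 : PowerSeries.constantCoeff g = 0 := by
          rw [← PowerSeries.coeff_zero_eq_constantCoeff]; exact hconst g hg
        obtain ⟨g', hg'⟩ := PowerSeries.X_dvd_iff.mpr h0
        rw [hg'] at hg
        have hmul : Φ (PowerSeries.X * g') = s * Φ g' := by rw [map_mul, hΦ, Phi_X]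
        have hg'0 : Φ g' = 0 := by
          rcases mul_eq_zero.mp (hmul ▸ hg) with h | h
          · exact absurd h hs.ne_zero
          · exact h
        rw [hg', PowerSeries.coeff_succ_X_mul]
        exact ih g' hg'0
    ext n
    rw [key n f hf, map_zero]
  have surj : Function.Surjective Φ := by
    intro a
    set E := Equiv.ofBijective _ hrep with hE
    set rep : A → A := fun b => ((E.symm (residue A b) : ↥F) : A) with hrepdef
    have hrepres : ∀ b, residue A (rep b) = residue A b := fun b =>
      E.apply_symm_apply (residue A b)
    have hstep : ∀ b : A, ∃ c : A, b - rep b = s * c := by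
      intro b
      have hmem : b - rep b ∈ maximalIdeal A := by
        have : residue A (b - rep b) = 0 := by rw [map_sub, hrepres, sub_self]
        exact Ideal.Quotient.eq_zero_iff_mem.mp this
      rwa [hs.maximalIdeal_eq, Ideal.mem_span_singleton] at hmem
    set r := CompleteDvrIso.seq s rep hstep a with hr
    set f : PowerSeries ↥F := PowerSeries.mk (fun n => E.symm (residue A (r n))) with hf
    have hcoeff : ∀ n, ((PowerSeries.coeff n f : ↥F) : A) = rep (r n) := by
      intro n
      rw [hf, PowerSeries.coeff_mk, hrepdef]
    have hsum : ∀ n : ℕ, a - P F s n f = s ^ n * r n := by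
      intro n
      induction n with
      | zero =>
        rw [P_eq_sum, Finset.sum_range_zero, sub_zero, pow_zero, one_mul, hr]
        rfl
      | succ n ih =>
        have hspec : r n - rep (r n) = s * r (n + 1) := CompleteDvrIso.seq_spec s rep hstep a n
        have e1 : a - P F s (n + 1) f = (a - P F s n f) - rep (r n) * s ^ n := by
          rw [P_eq_sum, P_eq_sum, Finset.sum_range_succ, hcoeff]; ring
        rw [e1, ih]
        calc s ^ n * r n - rep (r n) * s ^ n = s ^ n * (r n - rep (r n)) := by ring
          _ = s ^ n * (s * r (n + 1)) := by rw [hspec]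
          _ = s ^ (n + 1) * r (n + 1) := by ring
    exact ⟨f, (phi_unique F hs f a fun n => ⟨r n, hsum n⟩).symm⟩
  refine ⟨(RingEquiv.ofBijective Φ ⟨inj, surj⟩).symm, ?_, ?_⟩
  · have h : (RingEquiv.ofBijective Φ ⟨inj, surj⟩) PowerSeries.X = s := Phi_X F hs
    rw [← h]
    exact (RingEquiv.ofBijective Φ ⟨inj, surj⟩).symm_apply_apply _
  · intro x
    have h : (RingEquiv.ofBijective Φ ⟨inj, surj⟩) (PowerSeries.C (R := ↥F) x) = (x : A) := Phi_C F hs x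
    rw [← h]
    exact (RingEquiv.ofBijective Φ ⟨inj, surj⟩).symm_apply_apply _
end

section
/- For any field F, a field of generalized power series F((Γ)) with exponents in an ordered abelian group Γ, equipped with its canonical valuation, is a maximal valued field: it admits no proper immediate extension. -/
/-- A Hahn series field `F((Γ))` with its canonical valuation is a maximal valued field:
it admits no proper immediate extension.  Here an immediate extension is a valued field
extension `(L, w)/(F((Γ)), addVal)` (with the same value group, as the extension is
immediate) inducing isomorphisms on value groups and residue fields, and the conclusion is
that any such extension is surjective, hence not proper. -/
theorem hahnSeries_maximal (F : Type*) [Field F] (Γ : Type*) [AddCommGroup Γ] [LinearOrder Γ] [IsOrderedAddMonoid Γ]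
    (L : Type*) [Field L] (w : AddValuation L (WithTop Γ))
    (f : HahnSeries Γ F →+* L)
    -- `f` is an extension of valued fields
    (hcompat : ∀ x : HahnSeries Γ F, w (f x) = HahnSeries.addVal Γ F x)
    -- the extension is immediate: no new values ...
    (hval : ∀ y : L, y ≠ 0 → ∃ x : HahnSeries Γ F, w (f x) = w y)
    -- ... and no new residues
    (hres : ∀ y : L, 0 ≤ w y → ∃ x : HahnSeries Γ F, 0 < w (f x - y)) :
    Function.Surjective f := by
  classical
  intro y
  set v := HahnSeries.addVal Γ F with hv
  -- the candidate coefficient function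
  set P : Γ → Prop := fun γ => ∃ x : HahnSeries Γ F, (γ : WithTop Γ) < w (f x - y) with hP
  set a : Γ → F := fun γ => if h : P γ then h.choose.coeff γ else 0 with ha
  -- coherence: any witness computes the coefficient
  have coh : ∀ (γ : Γ) (x : HahnSeries Γ F), (γ : WithTop Γ) < w (f x - y) →
      a γ = x.coeff γ := by
    intro γ x hx
    have hPγ : P γ := ⟨x, hx⟩
    have hx0 : (γ : WithTop Γ) < w (f hPγ.choose - y) := hPγ.choose_spec
    have hsub : (γ : WithTop Γ) < v (hPγ.choose - x) := by
      have h1 : f hPγ.choose - f x = (f hPγ.choose - y) - (f x - y) := by ring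
      have h2 : (γ : WithTop Γ) < w (f hPγ.choose - f x) := by
        rw [h1]
        exact lt_of_lt_of_le (lt_min hx0 hx) (w.map_sub _ _)
      rwa [← map_sub, hcompat] at h2
    have hco : (hPγ.choose - x).coeff γ = 0 := by
      by_contra hc
      exact absurd (HahnSeries.addVal_le_of_coeff_ne_zero hc) (not_le.mpr hsub)
    rw [HahnSeries.coeff_sub] at hco
    have heq : hPγ.choose.coeff γ = x.coeff γ := sub_eq_zero.mp hco
    simp only [ha]
    rw [dif_pos hPγ]
    exact heq
  -- the support of `a` is well-founded
  have hwf : (Function.support a).IsWF := by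
    rw [Set.isWF_iff_no_descending_seq]
    intro g hg hmem
    have h0 : P (g 0) := by
      by_contra hP0
      have hm : a (g 0) ≠ 0 := hmem 0
      simp only [ha] at hm
      rw [dif_neg hP0] at hm
      exact hm rfl
    obtain ⟨x0, hx0⟩ := h0
    have : ∀ n : ℕ, g (n + 1) ∈ x0.support := by
      intro n
      have hlt : ((g (n + 1) : Γ) : WithTop Γ) < w (f x0 - y) :=
        lt_trans (WithTop.coe_lt_coe.mpr (hg (Nat.succ_pos n))) hx0
      have hco := coh (g (n + 1)) x0 hlt
      have hmem' : a (g (n + 1)) ≠ 0 := hmem (n + 1)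
      rw [hco] at hmem'
      exact Function.mem_support.mpr hmem'
    exact (Set.isWF_iff_no_descending_seq.mp x0.isWF_support) (fun n => g (n + 1))
      (fun m n hmn => hg (by omega : m + 1 < n + 1)) this
  set X : HahnSeries Γ F := ⟨a, hwf.isPWO⟩ with hX
  refine ⟨X, ?_⟩
  by_contra hne
  have hz : f X - y ≠ 0 := sub_ne_zero.mpr hne
  set z := f X - y with hzdef
  -- `w z` is not top
  have hztop : w z ≠ ⊤ := w.ne_top_iff.mpr hz
  obtain ⟨γ, hγ⟩ : ∃ γ : Γ, w z = (γ : WithTop Γ) := by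
    cases hwz : w z with
    | top => exact absurd hwz hztop
    | coe γ => exact ⟨γ, rfl⟩
  obtain ⟨x₁, hx₁⟩ := hval z hz
  have hfx₁ : f x₁ ≠ 0 := by
    intro h
    rw [h, w.map_zero] at hx₁
    exact hztop hx₁.symm
  set u := z * (f x₁)⁻¹ with hu
  have hwu : w u = 0 := by
    have h1 : u * f x₁ = z := by rw [hu, inv_mul_cancel_right₀ hfx₁]
    have h2 : w u + w (f x₁) = w z := by rw [← w.map_mul, h1]
    rw [hx₁, hγ] at h2
    have h3 : w u + (γ : WithTop Γ) = 0 + (γ : WithTop Γ) := by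
      rw [zero_add]; exact h2
    exact WithTop.add_right_cancel (WithTop.coe_ne_top) h3
  obtain ⟨x₂, hx₂⟩ := hres u (le_of_eq hwu.symm)
  set x' := X - x₁ * x₂ with hx'
  -- the improved approximation
  have hkey : (γ : WithTop Γ) < w (f x' - y) := by
    have heq : f x' - y = -(f x₁ * (f x₂ - u)) := by
      simp only [hx', map_sub, map_mul, hu, hzdef]
      field_simp
      ring
    rw [heq, w.map_neg, w.map_mul, hx₁, hγ]
    calc (γ : WithTop Γ) = (γ : WithTop Γ) + 0 := by rw [add_zero]
    _ < (γ : WithTop Γ) + w (f x₂ - u) :=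
        WithTop.add_lt_add_left WithTop.coe_ne_top hx₂
  -- hence all coefficients of `x₁ * x₂` below `γ` vanish
  have hcoeff : ∀ η : Γ, η ≤ γ → (x₁ * x₂).coeff η = 0 := by
    intro η hη
    have hηlt : ((η : Γ) : WithTop Γ) < w (f x' - y) :=
      lt_of_le_of_lt (by exact_mod_cast hη) hkey
    have h1 : a η = x'.coeff η := coh η x' hηlt
    have h2 : X.coeff η = a η := rfl
    have : (x₁ * x₂).coeff η = X.coeff η - x'.coeff η := by
      rw [hx', HahnSeries.coeff_sub]; ring
    rw [this, h2, h1, sub_self]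
  -- so the valuation of `x₁ * x₂` exceeds `γ`
  have hvx : (γ : WithTop Γ) < v (x₁ * x₂) := by
    by_cases h0 : x₁ * x₂ = 0
    · rw [h0, hv, HahnSeries.addVal_apply, HahnSeries.orderTop_zero]
      exact WithTop.coe_lt_top γ
    · by_contra hle
      push_neg at hle
      rw [hv, HahnSeries.addVal_apply_of_ne h0] at hle
      have horder : (x₁ * x₂).order ≤ γ := by exact_mod_cast hle
      exact h0 (HahnSeries.coeff_order_eq_zero.mp (hcoeff _ horder))
  -- contradiction: `w z > γ`
  have hfinal : (γ : WithTop Γ) < w z := by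
    have heq : z = (f x' - y) + f (x₁ * x₂) := by
      simp only [hx', map_sub]
      ring
    rw [heq]
    exact w.map_lt_add hkey (by rw [hcompat]; exact hvx)
  rw [hγ] at hfinal
  exact lt_irrefl _ hfinal
end
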